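/- Let V be a variety with 0⃗ and 1⃗ having Boolean factor congruences (BFC). Then V has right existentially definable factor congruences (RexDFC) if and only if for every A ∈ V and every central element e⃗ ∈ Z(A), the factor congruence θ_{1,e} equals the principal congruence θ^A(1⃗,e⃗) generated by the pairs (1ᵢ,eᵢ), 1 ≤ i ≤ n. -/

import Mathlib

open FirstOrder FirstOrder.Language FirstOrder.Language.Structure

universe u v w

namespace Paper

variable {L : FirstOrder.Language.{0, 0}}

/-- A congruence on an `L`-algebra: an equivalence relation compatible with all operations. -/
structure AlgCon (L : FirstOrder.Language.{0, 0}) (A : Type u) [L.Structure A] where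
  r : A → A → Prop
  refl : ∀ a, r a a
  symm : ∀ {a b}, r a b → r b a
  trans : ∀ {a b c}, r a b → r b c → r a c
  compat : ∀ {m : ℕ} (f : L.Functions m) (x y : Fin m → A),
    (∀ i, r (x i) (y i)) → r (funMap f x) (funMap f y)

namespace AlgCon

variable {A : Type u} [L.Structure A]

theorem ext' {c d : AlgCon L A} (h : ∀ a b, c.r a b ↔ d.r a b) : c = d := by
  cases c; cases d
  simp only [AlgCon.mk.injEq]
  funext a b
  exact propext (h a b)

/-- The identity (diagonal) congruence Δ. -/
def delta (L : FirstOrder.Language.{0, 0}) (A : Type u) [L.Structure A] : AlgCon L A where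
  r := Eq
  refl := fun _ => rfl
  symm := fun h => h.symm
  trans := fun h1 h2 => h1.trans h2
  compat := fun f x y h => by rw [funext h]

/-- The universal congruence ∇. -/
def nabla (L : FirstOrder.Language.{0, 0}) (A : Type u) [L.Structure A] : AlgCon L A where
  r := fun _ _ => True
  refl := fun _ => trivial
  symm := fun _ => trivial
  trans := fun _ _ => trivial
  compat := fun _ _ _ _ => trivial

/-- Meet (intersection) of congruences. -/
def inf (c d : AlgCon L A) : AlgCon L A where
  r := fun a b => c.r a b ∧ d.r a b
  refl := fun a => ⟨c.refl a, d.refl a⟩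
  symm := fun h => ⟨c.symm h.1, d.symm h.2⟩
  trans := fun h1 h2 => ⟨c.trans h1.1 h2.1, d.trans h1.2 h2.2⟩
  compat := fun f x y h =>
    ⟨c.compat f x y fun i => (h i).1, d.compat f x y fun i => (h i).2⟩

/-- Relational composition of congruences (as a binary relation). -/
def comp (c d : AlgCon L A) (a b : A) : Prop := ∃ z, c.r a z ∧ d.r z b

/-- The congruence generated by a binary relation. -/
def conGen (L : FirstOrder.Language.{0, 0}) {A : Type u} [L.Structure A]
    (R : A → A → Prop) : AlgCon L A where
  r := fun a b => ∀ c : AlgCon L A, (∀ x y, R x y → c.r x y) → c.r a b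
  refl := fun a _ _ => AlgCon.refl _ a
  symm := fun h c hc => c.symm (h c hc)
  trans := fun h1 h2 c hc => c.trans (h1 c hc) (h2 c hc)
  compat := fun f x y h c hc => c.compat f x y fun i => h i c hc

/-- Join of congruences in the congruence lattice. -/
def sup (c d : AlgCon L A) : AlgCon L A :=
  conGen L (fun a b => c.r a b ∨ d.r a b)

end AlgCon

/-- The principal congruence θ(a⃗, b⃗) generated by the pairs (aᵢ, bᵢ). -/
def thetaPairs {A : Type u} [L.Structure A] {n : ℕ} (a b : Fin n → A) : AlgCon L A :=
  AlgCon.conGen L (fun x y => ∃ i, x = a i ∧ y = b i)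

/-- The congruence θ(S) generated by S × S. -/
def thetaSet {A : Type u} [L.Structure A] (S : Set A) : AlgCon L A :=
  AlgCon.conGen L (fun x y => x ∈ S ∧ y ∈ S)

/-- `[a⃗, b⃗] ∈ θ`: all pairs (aᵢ, bᵢ) belong to the congruence θ. -/
def inCon {A : Type u} [L.Structure A] {n : ℕ} (θ : AlgCon L A) (a b : Fin n → A) : Prop :=
  ∀ i, θ.r (a i) (b i)

/-- θ and δ are complementary factor congruences: θ ∩ δ = Δ and θ ∘ δ = ∇. -/
def IsComplFC {A : Type u} [L.Structure A] (θ δ : AlgCon L A) : Prop :=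
  θ.inf δ = AlgCon.delta L A ∧ ∀ a b : A, θ.comp δ a b

/-- The set of factor congruences of `A`. -/
def FC (L : FirstOrder.Language.{0, 0}) (A : Type u) [L.Structure A] : Set (AlgCon L A) :=
  {θ | ∃ δ, IsComplFC θ δ}

/-- `S` is a Boolean sublattice of the congruence lattice of `A`: it contains Δ and ∇,
is closed under meet and join, is distributive, and every element has a complement in `S`. -/
def IsBooleanSublattice {A : Type u} [L.Structure A] (S : Set (AlgCon L A)) : Prop :=
  AlgCon.delta L A ∈ S ∧ AlgCon.nabla L A ∈ S ∧
  (∀ θ ∈ S, ∀ δ ∈ S, θ.inf δ ∈ S) ∧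
  (∀ θ ∈ S, ∀ δ ∈ S, θ.sup δ ∈ S) ∧
  (∀ θ ∈ S, ∀ δ ∈ S, ∀ γ ∈ S, θ.inf (δ.sup γ) = (θ.inf δ).sup (θ.inf γ)) ∧
  (∀ θ ∈ S, ∃ δ ∈ S, θ.inf δ = AlgCon.delta L A ∧ θ.sup δ = AlgCon.nabla L A)

/-- An identity (equation between two terms in finitely many variables). -/
structure Identity (L : FirstOrder.Language.{0, 0}) where
  nvars : ℕ
  lhs : L.Term (Fin nvars)
  rhs : L.Term (Fin nvars)

/-- An identity holds in an algebra. -/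
def Identity.Holds (e : Identity L) (A : Type u) [L.Structure A] : Prop :=
  ∀ v : Fin e.nvars → A, e.lhs.realize v = e.rhs.realize v

/-- Membership of an algebra in the variety axiomatized by the set of identities `E`. -/
def InVariety (E : Set (Identity L)) (A : Type u) [L.Structure A] : Prop :=
  ∀ e ∈ E, e.Holds A

/-- The data of the closed terms 0₁, …, 0ₙ and 1₁, …, 1ₙ. -/
structure ZeroOneData (L : FirstOrder.Language.{0, 0}) where
  n : ℕ
  npos : 0 < n
  zero : Fin n → L.Term Empty
  one : Fin n → L.Term Empty

/-- The interpretation of the tuple 0⃗ in an algebra. -/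
def ZeroOneData.zeroA (Z : ZeroOneData L) (A : Type u) [L.Structure A] : Fin Z.n → A :=
  fun i => (Z.zero i).realize Empty.elim

/-- The interpretation of the tuple 1⃗ in an algebra. -/
def ZeroOneData.oneA (Z : ZeroOneData L) (A : Type u) [L.Structure A] : Fin Z.n → A :=
  fun i => (Z.one i).realize Empty.elim

/-- `V ⊨ (0⃗ ≈ 1⃗) → x ≈ y`: `V` is a variety with 0⃗ and 1⃗. -/
def ZeroOneData.Separates (Z : ZeroOneData L) (E : Set (Identity L)) : Prop :=
  ∀ (A : Type u) [L.Structure A], InVariety E A →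
    (∀ i, Z.zeroA A i = Z.oneA A i) → Subsingleton A

/-- Product structure on `A × B`. -/
instance prodStructure (A : Type u) (B : Type u) [L.Structure A] [L.Structure B] :
    L.Structure (A × B) where
  funMap := fun f x => (funMap f (fun i => (x i).1), funMap f (fun i => (x i).2))
  RelMap := fun r x => RelMap r (fun i => (x i).1) ∧ RelMap r (fun i => (x i).2)

/-- A witness that `e⃗` is a central element of `A`: an isomorphism
`τ : A ≅ A₁ × A₂` with `A₁, A₂ ∈ V` and `τ(e⃗) = [0⃗, 1⃗]`. -/
structure CentralWitness (E : Set (Identity L)) (Z : ZeroOneData L)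
    (A : Type u) [L.Structure A] (e : Fin Z.n → A) : Type (u + 1) where
  A₁ : Type u
  A₂ : Type u
  [s₁ : L.Structure A₁]
  [s₂ : L.Structure A₂]
  mem₁ : InVariety E A₁
  mem₂ : InVariety E A₂
  iso : A ≃[L] (A₁ × A₂)
  he : ∀ i, iso (e i) = (Z.zeroA A₁ i, Z.oneA A₂ i)

/-- A witness that `e⃗` and `f⃗` are complementary central elements of `A`. -/
structure ComplCentralWitness (E : Set (Identity L)) (Z : ZeroOneData L)
    (A : Type u) [L.Structure A] (e f : Fin Z.n → A) extends
    CentralWitness E Z A e : Type (u + 1) where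
  hf : ∀ i, iso (f i) = (Z.oneA A₁ i, Z.zeroA A₂ i)

/-- `e⃗` is a central element of `A`. -/
def IsCentral (E : Set (Identity L)) (Z : ZeroOneData L)
    (A : Type u) [L.Structure A] (e : Fin Z.n → A) : Prop :=
  Nonempty (CentralWitness E Z A e)

/-- `e⃗ ⋄_A f⃗`: `e⃗` and `f⃗` are complementary central elements of `A`. -/
def CentDiamond (E : Set (Identity L)) (Z : ZeroOneData L)
    (A : Type u) [L.Structure A] (e f : Fin Z.n → A) : Prop :=
  Nonempty (ComplCentralWitness E Z A e f)

/-- `V` has Boolean factor congruences: for every `A ∈ V`, `FC(A)` is a Boolean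
sublattice of `Con(A)`. -/
def HasBFC (E : Set (Identity L)) : Prop :=
  ∀ (A : Type u) [L.Structure A], InVariety E A → IsBooleanSublattice (FC L A)

/-- `V` is stable by complements: every homomorphism between members of `V`
preserves complementary central elements. -/
def StableByComplements (E : Set (Identity L)) (Z : ZeroOneData L) : Prop :=
  ∀ (A B : Type u) [L.Structure A] [L.Structure B], InVariety E A → InVariety E B →
    ∀ (f : A →[L] B) (e g : Fin Z.n → A), CentDiamond E Z A e g →
      CentDiamond E Z B (fun i => f (e i)) (fun i => f (g i))

/-- A formula is existential: of the form ∃w⃗ ψ with ψ quantifier-free. -/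
def IsExistentialForm {α : Type*} (φ : L.Formula α) : Prop :=
  ∃ (m : ℕ) (ψ : L.BoundedFormula α m), ψ.IsQF ∧ φ = ψ.exs

/-- The formula λ(z⃗, x, y) satisfies the condition (R): for all `A, B ∈ V`,
`A × B ⊨ λ([0⃗,1⃗], (a,c), (b,d))` iff `c = d`. -/
def RightFormulaWorks (E : Set (Identity L)) (Z : ZeroOneData L)
    (φ : L.Formula ((Fin Z.n) ⊕ (Fin 2))) : Prop :=
  ∀ (A B : Type u) [L.Structure A] [L.Structure B], InVariety E A → InVariety E B →
    ∀ (a b : A) (c d : B),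
      (φ.Realize (M := A × B)
        (Sum.elim (fun i => (Z.zeroA A i, Z.oneA B i)) ![(a, c), (b, d)]) ↔ c = d)

/-- The formula ρ(z⃗, x, y) satisfies the condition (L): for all `A, B ∈ V`,
`A × B ⊨ ρ([0⃗,1⃗], (a,c), (b,d))` iff `a = b`. -/
def LeftFormulaWorks (E : Set (Identity L)) (Z : ZeroOneData L)
    (φ : L.Formula ((Fin Z.n) ⊕ (Fin 2))) : Prop :=
  ∀ (A B : Type u) [L.Structure A] [L.Structure B], InVariety E A → InVariety E B →
    ∀ (a b : A) (c d : B),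
      (φ.Realize (M := A × B)
        (Sum.elim (fun i => (Z.zeroA A i, Z.oneA B i)) ![(a, c), (b, d)]) ↔ a = b)

/-- `V` has right existentially definable factor congruences. -/
def HasRexDFC (E : Set (Identity L)) (Z : ZeroOneData L) : Prop :=
  HasBFC.{u} E ∧ ∃ φ : L.Formula ((Fin Z.n) ⊕ (Fin 2)),
    IsExistentialForm φ ∧ RightFormulaWorks.{u} E Z φ

/-- `V` has left existentially definable factor congruences. -/
def HasLexDFC (E : Set (Identity L)) (Z : ZeroOneData L) : Prop :=
  HasBFC.{u} E ∧ ∃ φ : L.Formula ((Fin Z.n) ⊕ (Fin 2)),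
    IsExistentialForm φ ∧ LeftFormulaWorks.{u} E Z φ

/-- `(θ, δ)` is the pair of complementary factor congruences associated with the
central element `e⃗`, i.e. `θ ⋄ δ`, `[e⃗,0⃗] ∈ θ` and `[e⃗,1⃗] ∈ δ`. -/
def PairFor (Z : ZeroOneData L) (A : Type u) [L.Structure A]
    (e : Fin Z.n → A) (θ δ : AlgCon L A) : Prop :=
  IsComplFC θ δ ∧ inCon θ e (Z.zeroA A) ∧ inCon δ e (Z.oneA A)

/-- `a⃗ = e⃗ ∧ f⃗` in the center: `[a⃗,0⃗] ∈ θ_{0,e} ∩ θ_{0,f}` and `[a⃗,1⃗] ∈ θ_{1,e} ∨ θ_{1,f}`. -/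
def IsMeetOf (Z : ZeroOneData L) (A : Type u) [L.Structure A]
    (e f a : Fin Z.n → A) : Prop :=
  ∃ θ₀e θ₁e θ₀f θ₁f : AlgCon L A, PairFor Z A e θ₀e θ₁e ∧ PairFor Z A f θ₀f θ₁f ∧
    inCon (θ₀e.inf θ₀f) a (Z.zeroA A) ∧ inCon (θ₁e.sup θ₁f) a (Z.oneA A)

/-- `a⃗ = e⃗ ∨ f⃗` in the center: `[a⃗,0⃗] ∈ θ_{0,e} ∨ θ_{0,f}` and `[a⃗,1⃗] ∈ θ_{1,e} ∩ θ_{1,f}`. -/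
def IsJoinOf (Z : ZeroOneData L) (A : Type u) [L.Structure A]
    (e f a : Fin Z.n → A) : Prop :=
  ∃ θ₀e θ₁e θ₀f θ₁f : AlgCon L A, PairFor Z A e θ₀e θ₁e ∧ PairFor Z A f θ₀f θ₁f ∧
    inCon (θ₀e.sup θ₀f) a (Z.zeroA A) ∧ inCon (θ₁e.inf θ₁f) a (Z.oneA A)

/-- `a⃗ = e⃗^c` in the center: `[a⃗,1⃗] ∈ θ_{0,e}` and `[a⃗,0⃗] ∈ θ_{1,e}`. -/
def IsComplOf (Z : ZeroOneData L) (A : Type u) [L.Structure A]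
    (e a : Fin Z.n → A) : Prop :=
  ∃ θ₀e θ₁e : AlgCon L A, PairFor Z A e θ₀e θ₁e ∧
    inCon θ₀e a (Z.oneA A) ∧ inCon θ₁e a (Z.zeroA A)

section Quotient

variable {A : Type u} [L.Structure A]

/-- The setoid underlying a congruence. -/
def AlgCon.setoid (c : AlgCon L A) : Setoid A :=
  ⟨c.r, ⟨c.refl, fun h => c.symm h, fun h1 h2 => c.trans h1 h2⟩⟩

/-- The quotient algebra `A/θ`. -/
def ConQuot (c : AlgCon L A) : Type u := Quotient c.setoid

/-- The class of `a` in `A/θ`. -/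
def ConQuot.mk (c : AlgCon L A) (a : A) : ConQuot c := Quotient.mk c.setoid a

noncomputable instance conQuotStructure (c : AlgCon L A) : L.Structure (ConQuot c) where
  funMap := fun f x => ConQuot.mk c (funMap f (fun i => (Quotient.out (α := A) (s := c.setoid) (x i))))
  RelMap := fun r x => ∃ as : Fin _ → A, (∀ i, ConQuot.mk c (as i) = x i) ∧ RelMap r as

theorem conQuot_funMap_mk (c : AlgCon L A) {m : ℕ} (f : L.Functions m) (as : Fin m → A) :
    funMap f (fun i => ConQuot.mk c (as i)) = ConQuot.mk c (funMap f as) := by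
  show ConQuot.mk c _ = ConQuot.mk c _
  apply Quotient.sound
  apply c.compat
  intro i
  exact Quotient.mk_out (s := c.setoid) (as i)

/-- The canonical quotient homomorphism `A → A/θ`. -/
def conQuotMk (c : AlgCon L A) : A →[L] ConQuot c where
  toFun := ConQuot.mk c
  map_fun' := fun f x => (conQuot_funMap_mk c f x).symm
  map_rel' := fun _r x h => ⟨x, fun _ => rfl, h⟩

end Quotient

end Paper
namespace Paper

open FirstOrder FirstOrder.Language FirstOrder.Language.Structure

namespace Aux

variable {L : FirstOrder.Language.{0, 0}}

section Cong

variable {A : Type u} [L.Structure A]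

/-- Inclusion of congruences. -/
def Le (c d : AlgCon L A) : Prop := ∀ a b, c.r a b → d.r a b

theorem r_iff_of_eq {c d : AlgCon L A} (h : c = d) (a b : A) : c.r a b ↔ d.r a b := by
  rw [h]

theorem le_antisymm' {c d : AlgCon L A} (h1 : Le c d) (h2 : Le d c) : c = d :=
  AlgCon.ext' fun a b => ⟨h1 a b, h2 a b⟩

theorem conGen_le {R : A → A → Prop} {c : AlgCon L A} (h : ∀ x y, R x y → c.r x y) :
    Le (AlgCon.conGen L R) c := fun _ _ hab => hab c h

theorem conGen_contains {R : A → A → Prop} {x y : A} (h : R x y) :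
    (AlgCon.conGen L R).r x y := fun _ hc => hc _ _ h

theorem le_sup_left (c d : AlgCon L A) : Le c (c.sup d) :=
  fun _ _ h => conGen_contains (Or.inl h)

theorem le_sup_right (c d : AlgCon L A) : Le d (c.sup d) :=
  fun _ _ h => conGen_contains (Or.inr h)

theorem sup_le {c d e : AlgCon L A} (h1 : Le c e) (h2 : Le d e) : Le (c.sup d) e :=
  conGen_le fun x y hxy => hxy.elim (h1 x y) (h2 x y)

theorem delta_le (c : AlgCon L A) : Le (AlgCon.delta L A) c := by
  intro a b h
  cases h
  exact c.refl a

theorem delta_sup (c : AlgCon L A) : (AlgCon.delta L A).sup c = c :=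
  le_antisymm' (sup_le (delta_le c) (fun _ _ h => h)) (le_sup_right _ _)

theorem inf_nabla (c : AlgCon L A) : c.inf (AlgCon.nabla L A) = c :=
  AlgCon.ext' fun a b => ⟨fun h => h.1, fun h => ⟨h, trivial⟩⟩

theorem inf_comm' (c d : AlgCon L A) : c.inf d = d.inf c :=
  AlgCon.ext' fun a b => ⟨fun h => ⟨h.2, h.1⟩, fun h => ⟨h.2, h.1⟩⟩

theorem sup_eq_nabla_of_all {c d : AlgCon L A} (h : ∀ a b, (c.sup d).r a b) :
    c.sup d = AlgCon.nabla L A :=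
  AlgCon.ext' fun a b => ⟨fun _ => trivial, fun _ => h a b⟩

theorem isComplFC_symm {c d : AlgCon L A} (h : IsComplFC c d) : IsComplFC d c := by
  refine ⟨by rw [inf_comm']; exact h.1, fun a b => ?_⟩
  obtain ⟨z, hz1, hz2⟩ := h.2 b a
  exact ⟨z, d.symm hz2, c.symm hz1⟩

theorem thetaPairs_le {n : ℕ} {a b : Fin n → A} {c : AlgCon L A}
    (h : ∀ i, c.r (a i) (b i)) : Le (thetaPairs (L := L) a b) c :=
  conGen_le fun x y ⟨i, hx, hy⟩ => hx ▸ hy ▸ h i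

theorem thetaPairs_contains {n : ℕ} (a b : Fin n → A) (i : Fin n) :
    (thetaPairs (L := L) a b).r (a i) (b i) :=
  conGen_contains ⟨i, rfl, rfl⟩

end Cong

section Realize

variable {A B : Type u} [L.Structure A] [L.Structure B]

theorem realize_prod {α : Type*} (t : L.Term α) (v : α → A × B) :
    t.realize v = (t.realize (Prod.fst ∘ v), t.realize (Prod.snd ∘ v)) := by
  induction t with
  | var i => rfl
  | func f ts ih =>
    simp only [Term.realize, ih]
    rfl

theorem zeroA_prod (Z : ZeroOneData L) (i : Fin Z.n) :
    Z.zeroA (A × B) i = (Z.zeroA A i, Z.zeroA B i) := by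
  show (Z.zero i).realize Empty.elim = _
  rw [realize_prod]
  have h1 : Prod.fst ∘ (Empty.elim : Empty → A × B) = Empty.elim := funext fun e => e.elim
  have h2 : Prod.snd ∘ (Empty.elim : Empty → A × B) = Empty.elim := funext fun e => e.elim
  rw [h1, h2]; rfl

theorem oneA_prod (Z : ZeroOneData L) (i : Fin Z.n) :
    Z.oneA (A × B) i = (Z.oneA A i, Z.oneA B i) := by
  show (Z.one i).realize Empty.elim = _
  rw [realize_prod]
  have h1 : Prod.fst ∘ (Empty.elim : Empty → A × B) = Empty.elim := funext fun e => e.elim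
  have h2 : Prod.snd ∘ (Empty.elim : Empty → A × B) = Empty.elim := funext fun e => e.elim
  rw [h1, h2]; rfl

theorem hom_closed (h : A →[L] B) (t : L.Term Empty) :
    h (t.realize Empty.elim) = t.realize Empty.elim := by
  have := HomClass.realize_term (v := (Empty.elim : Empty → A)) h (t := t)
  rw [← this]
  congr 1
  funext e
  exact e.elim

theorem hom_zeroA (Z : ZeroOneData L) (h : A →[L] B) (i : Fin Z.n) :
    h (Z.zeroA A i) = Z.zeroA B i := hom_closed h (Z.zero i)

theorem hom_oneA (Z : ZeroOneData L) (h : A →[L] B) (i : Fin Z.n) :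
    h (Z.oneA A i) = Z.oneA B i := hom_closed h (Z.one i)

theorem inVariety_prod {E : Set (Identity L)} (hA : InVariety E A) (hB : InVariety E B) :
    InVariety E (A × B) := by
  intro e he v
  rw [realize_prod, realize_prod]
  exact Prod.ext (hA e he _) (hB e he _)

theorem conQuotMk_surjective (c : AlgCon L A) : Function.Surjective (ConQuot.mk c) :=
  fun q => ⟨Quotient.out (s := c.setoid) q, Quotient.out_eq _⟩

theorem realize_conQuot (c : AlgCon L A) {α : Type*} (t : L.Term α) (v : α → A) :
    t.realize (fun a => ConQuot.mk c (v a)) = ConQuot.mk c (t.realize v) := by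
  have := HomClass.realize_term (v := v) (conQuotMk c) (t := t)
  exact this

theorem inVariety_conQuot {E : Set (Identity L)} (hA : InVariety E A) (c : AlgCon L A) :
    InVariety E (ConQuot c) := by
  intro e he v
  have hv : ∀ i, v i = ConQuot.mk c (Quotient.out (s := c.setoid) (v i)) :=
    fun i => (Quotient.out_eq _).symm
  have hveq : v = fun i => ConQuot.mk c (Quotient.out (s := c.setoid) (v i)) := funext hv
  rw [hveq, realize_conQuot, realize_conQuot, hA e he]

end Realize

end Aux

end Paper
namespace Paper

open FirstOrder FirstOrder.Language FirstOrder.Language.Structure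

namespace Aux

variable {L : FirstOrder.Language.{0, 0}}

section Homs

variable {A B C : Type u} [L.Structure A] [L.Structure B] [L.Structure C]

/-- First projection as a homomorphism. -/
def fstHom : (A × B) →[L] A where
  toFun := Prod.fst
  map_fun' := fun f x => rfl
  map_rel' := fun r x h => h.1

/-- Second projection as a homomorphism. -/
def sndHom : (A × B) →[L] B where
  toFun := Prod.snd
  map_fun' := fun f x => rfl
  map_rel' := fun r x h => h.2

/-- Pairing of homomorphisms. -/
def pairHom (h₁ : C →[L] A) (h₂ : C →[L] B) : C →[L] (A × B) where
  toFun := fun c => (h₁ c, h₂ c)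
  map_fun' := fun f x => by
    show (h₁ _, h₂ _) = _
    rw [h₁.map_fun, h₂.map_fun]
    rfl
  map_rel' := fun r x h => ⟨HomClass.map_rel h₁ r x h, HomClass.map_rel h₂ r x h⟩

/-- Pullback of a congruence along a homomorphism. -/
def pullCon (h : A →[L] B) (c : AlgCon L B) : AlgCon L A where
  r := fun a b => c.r (h a) (h b)
  refl := fun a => c.refl _
  symm := fun hab => c.symm hab
  trans := fun h1 h2 => c.trans h1 h2
  compat := fun f x y hxy => by
    show c.r (h (funMap f x)) (h (funMap f y))
    rw [h.map_fun, h.map_fun]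
    exact c.compat f _ _ hxy

/-- The kernel of the first projection, as a congruence. -/
def kerFst : AlgCon L (A × B) where
  r := fun u v => u.1 = v.1
  refl := fun _ => rfl
  symm := fun h => h.symm
  trans := fun h1 h2 => h1.trans h2
  compat := fun f x y h => by
    show funMap f (fun i => (x i).1) = funMap f (fun i => (y i).1)
    rw [funext h]

/-- The kernel of the second projection, as a congruence. -/
def kerSnd : AlgCon L (A × B) where
  r := fun u v => u.2 = v.2
  refl := fun _ => rfl
  symm := fun h => h.symm
  trans := fun h1 h2 => h1.trans h2
  compat := fun f x y h => by
    show funMap f (fun i => (x i).2) = funMap f (fun i => (y i).2)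
    rw [funext h]

theorem isComplFC_ker : IsComplFC (kerFst (L := L) (A := A) (B := B)) kerSnd := by
  constructor
  · refine AlgCon.ext' fun u v => ⟨fun h => ?_, fun h => by cases h; exact ⟨rfl, rfl⟩⟩
    exact Prod.ext h.1 h.2
  · intro u v
    exact ⟨(u.1, v.2), rfl, rfl⟩

end Homs

section QFTransfer

variable [L.IsAlgebraic]
variable {A B : Type u} [L.Structure A] [L.Structure B]

theorem qf_transfer (g : A →[L] B) (hg : Function.Injective g)
    {α : Type} {k : ℕ} {ψ : L.BoundedFormula α k} (hqf : ψ.IsQF)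
    (v : α → A) (xs : Fin k → A) :
    ψ.Realize v xs ↔ ψ.Realize (fun a => g (v a)) (fun i => g (xs i)) := by
  induction hqf with
  | falsum => exact Iff.rfl
  | of_isAtomic h =>
    cases h with
    | equal t₁ t₂ =>
      rw [BoundedFormula.realize_bdEqual, BoundedFormula.realize_bdEqual]
      have hcomp : (Sum.elim (fun a => g (v a)) (fun i => g (xs i)) : α ⊕ Fin k → B)
          = g ∘ Sum.elim v xs := by
        funext x; cases x <;> rfl
      rw [hcomp, HomClass.realize_term, HomClass.realize_term]
      exact ⟨fun h => h ▸ rfl, fun h => hg h⟩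
    | rel R ts => exact isEmptyElim R
  | imp h₁ h₂ ih₁ ih₂ =>
    rw [BoundedFormula.realize_imp, BoundedFormula.realize_imp, ih₁, ih₂]

theorem exs_transfer (g : A →[L] B) (hg : Function.Injective g)
    {α : Type} {k : ℕ} {ψ : L.BoundedFormula α k} (hqf : ψ.IsQF)
    {v : α → A} (h : ψ.exs.Realize v) : ψ.exs.Realize (fun a => g (v a)) := by
  rw [BoundedFormula.realize_exs] at h ⊢
  obtain ⟨xs, hxs⟩ := h
  exact ⟨fun i => g (xs i), (qf_transfer g hg hqf v xs).mp hxs⟩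

end QFTransfer

section Separation

variable {A : Type u} [L.Structure A]
variable {E : Set (Identity L)} {Z : ZeroOneData L}

/-- In a variety with 0 and 1, θ(0,1) is the universal congruence. -/
theorem thetaPairs_zero_one (hsep : ZeroOneData.Separates.{u} Z E)
    (hA : InVariety E A) (a b : A) :
    (thetaPairs (L := L) (Z.zeroA A) (Z.oneA A)).r a b := by
  set c := thetaPairs (L := L) (Z.zeroA A) (Z.oneA A) with hc
  have hQ : InVariety E (ConQuot c) := inVariety_conQuot hA c
  have hzo : ∀ i, Z.zeroA (ConQuot c) i = Z.oneA (ConQuot c) i := by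
    intro i
    have h0 : Z.zeroA (ConQuot c) i = ConQuot.mk c (Z.zeroA A i) := by
      show (Z.zero i).realize Empty.elim = _
      have : (Empty.elim : Empty → ConQuot c) = fun e => ConQuot.mk c (Empty.elim e) :=
        funext fun e => e.elim
      rw [this, realize_conQuot]
      rfl
    have h1 : Z.oneA (ConQuot c) i = ConQuot.mk c (Z.oneA A i) := by
      show (Z.one i).realize Empty.elim = _
      have : (Empty.elim : Empty → ConQuot c) = fun e => ConQuot.mk c (Empty.elim e) :=
        funext fun e => e.elim
      rw [this, realize_conQuot]
      rfl
    rw [h0, h1]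
    exact Quotient.sound (thetaPairs_contains (Z.zeroA A) (Z.oneA A) i)
  have hsub : Subsingleton (ConQuot c) := hsep (ConQuot c) hQ hzo
  have : ConQuot.mk c a = ConQuot.mk c b := Subsingleton.elim _ _
  exact Quotient.exact this

/-- Uniqueness of the pair of complementary factor congruences through a point. -/
theorem pair_unique (hsep : ZeroOneData.Separates.{u} Z E) (hbfc : HasBFC.{u} E)
    (hA : InVariety E A) {e : Fin Z.n → A} {θ δ θ' δ' : AlgCon L A}
    (h1 : PairFor Z A e θ δ) (h2 : PairFor Z A e θ' δ') : δ = δ' := by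
  obtain ⟨hcompl, hθ0, hδ1⟩ := h1
  obtain ⟨hcompl', hθ0', hδ1'⟩ := h2
  have hθFC : θ ∈ FC L A := ⟨δ, hcompl⟩
  have hδFC : δ ∈ FC L A := ⟨θ, isComplFC_symm hcompl⟩
  have hθFC' : θ' ∈ FC L A := ⟨δ', hcompl'⟩
  have hδFC' : δ' ∈ FC L A := ⟨θ', isComplFC_symm hcompl'⟩
  obtain ⟨_, _, _, _, hdist, _⟩ := hbfc A hA
  -- key: for any pair (θ₁, δ₂) from the two pairs, θ₁.sup δ₂ = ∇
  have key : ∀ (θ₁ δ₂ : AlgCon L A), (∀ i, θ₁.r (e i) (Z.zeroA A i)) →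
      (∀ i, δ₂.r (e i) (Z.oneA A i)) → θ₁.sup δ₂ = AlgCon.nabla L A := by
    intro θ₁ δ₂ hθ₁ hδ₂
    apply sup_eq_nabla_of_all
    intro a b
    have hgen : ∀ i, (θ₁.sup δ₂).r (Z.zeroA A i) (Z.oneA A i) := by
      intro i
      exact (θ₁.sup δ₂).trans
        ((θ₁.sup δ₂).symm (le_sup_left θ₁ δ₂ _ _ (hθ₁ i)))
        (le_sup_right θ₁ δ₂ _ _ (hδ₂ i))
    exact thetaPairs_le hgen a b (thetaPairs_zero_one hsep hA a b)
  have hsup1 : θ.sup δ' = AlgCon.nabla L A := key θ δ' hθ0 hδ1'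
  have hsup2 : θ'.sup δ = AlgCon.nabla L A := key θ' δ hθ0' hδ1
  -- δ ≤ δ'
  have hle : ∀ (d t d' : AlgCon L A), d ∈ FC L A → t ∈ FC L A → d' ∈ FC L A →
      t.inf d = AlgCon.delta L A → t.sup d' = AlgCon.nabla L A → Le d d' := by
    intro d t d' hd ht hd' hinf hsup
    have : d.inf (t.sup d') = (d.inf t).sup (d.inf d') := hdist d hd t ht d' hd'
    rw [hsup, inf_nabla] at this
    have hdt : d.inf t = AlgCon.delta L A := by rw [inf_comm']; exact hinf
    rw [hdt, delta_sup] at this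
    intro a b hab
    exact ((r_iff_of_eq this a b).mp hab).2
  have hle1 : Le δ δ' := hle δ θ δ' hδFC hθFC hδFC' hcompl.1 hsup1
  have hle2 : Le δ' δ := hle δ' θ' δ hδFC' hθFC' hδFC hcompl'.1 hsup2
  exact le_antisymm' hle1 hle2

end Separation

end Aux

end Paper
namespace Paper

open FirstOrder FirstOrder.Language FirstOrder.Language.Structure

namespace Aux

variable {L : FirstOrder.Language.{0, 0}} [L.IsAlgebraic]
variable {E : Set (Identity L)} {Z : ZeroOneData L}

section Forward

theorem kerSnd_le_thetaPairs
    (hrex : ∃ φ : L.Formula ((Fin Z.n) ⊕ (Fin 2)),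
      IsExistentialForm φ ∧ RightFormulaWorks.{u} E Z φ)
    {A₁ A₂ : Type u} [L.Structure A₁] [L.Structure A₂]
    (h₁ : InVariety E A₁) (h₂ : InVariety E A₂)
    (u v : A₁ × A₂) (huv : u.2 = v.2) :
    (thetaPairs (L := L) (Z.oneA (A₁ × A₂)) (fun i => (Z.zeroA A₁ i, Z.oneA A₂ i))).r u v := by
  obtain ⟨φ, ⟨m, ψ, hqf, hφ⟩, hwork⟩ := hrex
  set c := thetaPairs (L := L) (Z.oneA (A₁ × A₂)) (fun i => (Z.zeroA A₁ i, Z.oneA A₂ i)) with hc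
  set p := conQuotMk c with hp
  have hN : InVariety E (A₁ × A₂) := inVariety_prod h₁ h₂
  have hQ : InVariety E (ConQuot c) := inVariety_conQuot hN c
  set g : (A₁ × A₂) →[L] (A₁ × (A₂ × ConQuot c)) := pairHom fstHom (pairHom sndHom p) with hg
  have ginj : Function.Injective g := by
    intro a b h
    have h1 := congrArg (fun x : A₁ × (A₂ × ConQuot c) => x.1) h
    have h2 := congrArg (fun x : A₁ × (A₂ × ConQuot c) => x.2.1) h
    exact Prod.ext h1 h2
  have hmat : (![(u.1, u.2), (v.1, v.2)] : Fin 2 → A₁ × A₂) = ![u, v] := by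
    rw [Prod.mk.eta, Prod.mk.eta]
  have h0 : φ.Realize (M := A₁ × A₂)
      (Sum.elim (fun i => (Z.zeroA A₁ i, Z.oneA A₂ i)) ![u, v]) := by
    have := (hwork A₁ A₂ h₁ h₂ u.1 v.1 u.2 v.2).mpr huv
    rwa [hmat] at this
  subst hφ
  have h1' := exs_transfer g ginj hqf h0
  have hval : (fun a => g ((Sum.elim (fun i => (Z.zeroA A₁ i, Z.oneA A₂ i)) ![u, v]) a))
      = Sum.elim (fun i => (Z.zeroA A₁ i, Z.oneA (A₂ × ConQuot c) i))
          ![(u.1, (u.2, p u)), (v.1, (v.2, p v))] := by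
    funext a
    cases a with
    | inl i =>
      show g (Z.zeroA A₁ i, Z.oneA A₂ i) = (Z.zeroA A₁ i, Z.oneA (A₂ × ConQuot c) i)
      have hone : Z.oneA (A₂ × ConQuot c) i = (Z.oneA A₂ i, Z.oneA (ConQuot c) i) :=
        oneA_prod Z i
      have hpe : p (Z.zeroA A₁ i, Z.oneA A₂ i) = Z.oneA (ConQuot c) i := by
        have hmem : c.r (Z.oneA (A₁ × A₂) i) (Z.zeroA A₁ i, Z.oneA A₂ i) :=
          thetaPairs_contains _ _ i
        have heq : ConQuot.mk c (Z.oneA (A₁ × A₂) i)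
            = ConQuot.mk c (Z.zeroA A₁ i, Z.oneA A₂ i) := Quotient.sound hmem
        have hpone : p (Z.oneA (A₁ × A₂) i) = Z.oneA (ConQuot c) i := hom_oneA Z p i
        show ConQuot.mk c _ = _
        rw [← heq]
        exact hpone
      show (Z.zeroA A₁ i, (Z.oneA A₂ i, p (Z.zeroA A₁ i, Z.oneA A₂ i)))
          = (Z.zeroA A₁ i, Z.oneA (A₂ × ConQuot c) i)
      rw [hpe, hone]
    | inr j =>
      fin_cases j <;> rfl
  rw [hval] at h1'
  have hfin := (hwork A₁ (A₂ × ConQuot c) h₁ (inVariety_prod h₂ hQ)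
      u.1 v.1 (u.2, p u) (v.2, p v)).mp h1'
  have hpuv : p u = p v := congrArg Prod.snd hfin
  exact Quotient.exact hpuv

theorem forward_dir (hsep : ZeroOneData.Separates.{u} Z E) (hbfc : HasBFC.{u} E)
    (hrex : ∃ φ : L.Formula ((Fin Z.n) ⊕ (Fin 2)),
      IsExistentialForm φ ∧ RightFormulaWorks.{u} E Z φ)
    (A : Type u) [L.Structure A] (hA : InVariety E A)
    (e : Fin Z.n → A) (hcen : IsCentral E Z A e)
    (θ δ : AlgCon L A) (hpair : PairFor Z A e θ δ) :
    δ = thetaPairs (L := L) (Z.oneA A) e := by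
  obtain ⟨W⟩ := hcen
  letI := W.s₁
  letI := W.s₂
  set τ := W.iso with hτ
  set τh : A →[L] (W.A₁ × W.A₂) := τ.toHom with hτh
  set τh' : (W.A₁ × W.A₂) →[L] A := τ.symm.toHom with hτh'
  -- the standard pair
  set θs : AlgCon L A := pullCon τh kerFst with hθs
  set δs : AlgCon L A := pullCon τh kerSnd with hδs
  have hτsymm : ∀ a : A, τ.symm (τ a) = a := fun a => τ.toEquiv.symm_apply_apply a
  have hτinj : Function.Injective τ := fun a b h => by
    rw [← hτsymm a, ← hτsymm b, h]
  have hτe : ∀ i, τ (e i) = (Z.zeroA W.A₁ i, Z.oneA W.A₂ i) := W.he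
  have hτ0 : ∀ i, τ (Z.zeroA A i) = (Z.zeroA W.A₁ i, Z.zeroA W.A₂ i) := fun i => by
    rw [show (τ (Z.zeroA A i) : W.A₁ × W.A₂) = τh (Z.zeroA A i) from rfl, hom_zeroA Z τh i]
    exact zeroA_prod Z i
  have hτ1 : ∀ i, τ (Z.oneA A i) = (Z.oneA W.A₁ i, Z.oneA W.A₂ i) := fun i => by
    rw [show (τ (Z.oneA A i) : W.A₁ × W.A₂) = τh (Z.oneA A i) from rfl, hom_oneA Z τh i]
    exact oneA_prod Z i
  have hpairs : PairFor Z A e θs δs := by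
    refine ⟨⟨?_, ?_⟩, ?_, ?_⟩
    · refine AlgCon.ext' fun a b => ⟨fun h => ?_, fun h => by cases h; exact ⟨rfl, rfl⟩⟩
      exact hτinj (Prod.ext h.1 h.2)
    · intro a b
      refine ⟨τ.symm ((τ a).1, (τ b).2), ?_, ?_⟩
      · show (τ a).1 = (τ (τ.symm ((τ a).1, (τ b).2))).1
        rw [τ.apply_symm_apply]
      · show (τ (τ.symm ((τ a).1, (τ b).2))).2 = (τ b).2
        rw [τ.apply_symm_apply]
    · intro i
      show (τ (e i)).1 = (τ (Z.zeroA A i)).1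
      rw [hτe i, hτ0 i]
    · intro i
      show (τ (e i)).2 = (τ (Z.oneA A i)).2
      rw [hτe i, hτ1 i]
  have huniq : δ = δs := pair_unique hsep hbfc hA hpair hpairs
  -- δs = thetaPairs (oneA A) e
  have hδs_eq : δs = thetaPairs (L := L) (Z.oneA A) e := by
    apply le_antisymm'
    · -- δs ≤ thetaPairs
      intro a b hab
      have hab' : (τ a).2 = (τ b).2 := hab
      have hmem : (thetaPairs (L := L) (Z.oneA (W.A₁ × W.A₂))
          (fun i => (Z.zeroA W.A₁ i, Z.oneA W.A₂ i))).r (τ a) (τ b) :=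
        kerSnd_le_thetaPairs hrex W.mem₁ W.mem₂ (τ a) (τ b) hab'
      -- pull back along τ.symm
      set chat : AlgCon L (W.A₁ × W.A₂) := pullCon τh' (thetaPairs (L := L) (Z.oneA A) e)
        with hchat
      have hle : Le (thetaPairs (L := L) (Z.oneA (W.A₁ × W.A₂))
          (fun i => (Z.zeroA W.A₁ i, Z.oneA W.A₂ i))) chat := by
        apply thetaPairs_le
        intro i
        show (thetaPairs (L := L) (Z.oneA A) e).r
          (τ.symm (Z.oneA (W.A₁ × W.A₂) i)) (τ.symm (Z.zeroA W.A₁ i, Z.oneA W.A₂ i))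
        have e1 : τ.symm (Z.oneA (W.A₁ × W.A₂) i) = Z.oneA A i := hom_oneA Z τh' i
        have e2 : τ.symm (Z.zeroA W.A₁ i, Z.oneA W.A₂ i) = e i := by
          rw [← hτe i]; exact hτsymm (e i)
        rw [e1, e2]
        exact thetaPairs_contains _ _ i
      have h2 : (thetaPairs (L := L) (Z.oneA A) e).r (τ.symm (τ a)) (τ.symm (τ b)) :=
        hle _ _ hmem
      rwa [hτsymm a, hτsymm b] at h2
    · -- thetaPairs ≤ δs
      apply thetaPairs_le
      intro i
      show (τ (Z.oneA A i)).2 = (τ (e i)).2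
      rw [hτe i, hτ1 i]
  rw [huniq, hδs_eq]

end Forward

end Aux

end Paper
namespace Paper

open FirstOrder FirstOrder.Language FirstOrder.Language.Structure

namespace Aux

variable {L : FirstOrder.Language.{0, 0}}

section TermAlgebra

/-- The term algebra structure. -/
instance termStructure (α : Type w) : L.Structure (L.Term α) where
  funMap := fun f ts => Term.func f ts
  RelMap := fun _ _ => False

theorem realize_termAlg {α : Type w} {β : Type v} (t : L.Term β) (v : β → L.Term α) :
    t.realize v = t.subst v := by
  induction t with
  | var => rfl
  | func f ts ih =>
    show funMap f (fun i => (ts i).realize v) = Term.func f (fun i => (ts i).subst v)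
    show Term.func f (fun i => (ts i).realize v) = _
    congr 1
    funext i
    exact ih i

variable (E : Set (Identity L))

/-- The congruence on the term algebra generated by all substitution instances
of the identities in `E`. -/
def eCon (α : Type w) : AlgCon L (L.Term α) :=
  AlgCon.conGen L (fun s t => ∃ e ∈ E, ∃ σ : Fin e.nvars → L.Term α,
    s = e.lhs.subst σ ∧ t = e.rhs.subst σ)

/-- The kernel congruence of evaluation. -/
def kerRealize {α : Type w} {A : Type u} [L.Structure A] (v : α → A) :
    AlgCon L (L.Term α) where
  r := fun s t => s.realize v = t.realize v
  refl := fun _ => rfl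
  symm := fun h => h.symm
  trans := fun h1 h2 => h1.trans h2
  compat := fun f x y h => by
    show (Term.func f x).realize v = (Term.func f y).realize v
    show funMap f (fun i => (x i).realize v) = funMap f (fun i => (y i).realize v)
    congr 1
    exact funext h

theorem eCon_resp {α : Type w} {A : Type u} [L.Structure A] (hA : InVariety E A)
    (v : α → A) {s t : L.Term α} (h : (eCon E α).r s t) :
    s.realize v = t.realize v := by
  refine h (kerRealize v) ?_
  rintro x y ⟨e, he, σ, rfl, rfl⟩
  show (e.lhs.subst σ).realize v = (e.rhs.subst σ).realize v
  rw [Term.realize_subst, Term.realize_subst]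
  exact hA e he _

theorem inVariety_free (α : Type w) (hE : True) : InVariety E (ConQuot (eCon E α)) := by
  intro e he v
  have hv : v = fun i => ConQuot.mk (eCon E α) (Quotient.out (s := (eCon E α).setoid) (v i)) :=
    funext fun i => (Quotient.out_eq _).symm
  rw [hv, realize_conQuot, realize_conQuot]
  apply Quotient.sound
  show (eCon E α).r _ _
  rw [realize_termAlg e.lhs, realize_termAlg e.rhs]
  exact conGen_contains ⟨e, he, _, rfl, rfl⟩

/-- The universal property: any valuation extends to a hom from the free algebra. -/
noncomputable def freeLift {α : Type w} {A : Type u} [L.Structure A] [L.IsAlgebraic]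
    (hA : InVariety E A) (v : α → A) : ConQuot (eCon E α) →[L] A where
  toFun := fun q => (Quotient.out (s := (eCon E α).setoid) q).realize v
  map_fun' := fun f x =>
    eCon_resp E hA v (Quotient.mk_out (s := (eCon E α).setoid)
      (funMap f fun i => Quotient.out (s := (eCon E α).setoid) (x i)))
  map_rel' := fun r _ _ => isEmptyElim r

theorem freeLift_mk {α : Type w} {A : Type u} [L.Structure A] [L.IsAlgebraic]
    (hA : InVariety E A) (v : α → A) (t : L.Term α) :
    freeLift E hA v (ConQuot.mk _ t) = t.realize v :=
  eCon_resp E hA v (Quotient.mk_out (s := (eCon E α).setoid) _)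

end TermAlgebra

end Aux

end Paper
namespace Paper

open FirstOrder FirstOrder.Language FirstOrder.Language.Structure

namespace Aux

variable {L : FirstOrder.Language.{0, 0}}

section Backward

variable (Z : ZeroOneData L)

/-- Variable set for the positive-primitive witnessing equations. -/
abbrev Wvar := (Fin Z.n ⊕ Fin 2) ⊕ ℕ

/-- The canonical valuation. -/
def valW {C D : Type u} [L.Structure C] [L.Structure D]
    (uu vv : C × D) (w : ℕ → C × D) : Wvar Z → C × D :=
  Sum.elim (Sum.elim (fun i => (Z.zeroA C i, Z.oneA D i)) ![uu, vv]) w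

/-- All equations in the list hold at the canonical valuation. -/
def HoldsAt {C D : Type u} [L.Structure C] [L.Structure D]
    (Eqs : List (L.Term (Wvar Z) × L.Term (Wvar Z))) (uu vv : C × D) (w : ℕ → C × D) : Prop :=
  ∀ q ∈ Eqs, q.1.realize (valW Z uu vv w) = q.2.realize (valW Z uu vv w)

variable (E : Set (Identity L))

/-- The equations entail `uu.2 = vv.2` across the variety. -/
def GoodEqs (Eqs : List (L.Term (Wvar Z) × L.Term (Wvar Z))) : Prop :=
  ∀ (C D : Type u) [L.Structure C] [L.Structure D], InVariety E C → InVariety E D →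
    ∀ (uu vv : C × D) (w : ℕ → C × D), HoldsAt Z Eqs uu vv w → uu.2 = vv.2

/-- Relabeling a list of equations. -/
def rele (ρ : Wvar Z → Wvar Z) (Eqs : List (L.Term (Wvar Z) × L.Term (Wvar Z))) :
    List (L.Term (Wvar Z) × L.Term (Wvar Z)) :=
  Eqs.map fun q => (q.1.relabel ρ, q.2.relabel ρ)

theorem holdsAt_rele {C D : Type u} [L.Structure C] [L.Structure D]
    {ρ : Wvar Z → Wvar Z} {Eqs : List (L.Term (Wvar Z) × L.Term (Wvar Z))}
    {uu vv : C × D} {w : ℕ → C × D} {uu' vv' : C × D} {w' : ℕ → C × D}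
    (hval : valW Z uu vv w ∘ ρ = valW Z uu' vv' w') :
    HoldsAt Z (rele Z ρ Eqs) uu vv w ↔ HoldsAt Z Eqs uu' vv' w' := by
  constructor
  · intro h q hq
    have := h (q.1.relabel ρ, q.2.relabel ρ)
      (List.mem_map_of_mem (f := fun q : L.Term (Wvar Z) × L.Term (Wvar Z) => (q.1.relabel ρ, q.2.relabel ρ)) hq)
    rwa [Term.realize_relabel, Term.realize_relabel, hval] at this
  · intro h q hq
    rw [rele, List.mem_map] at hq
    obtain ⟨q0, hq0, rfl⟩ := hq
    show (q0.1.relabel ρ).realize (valW Z uu vv w) = (q0.2.relabel ρ).realize (valW Z uu vv w)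
    rw [Term.realize_relabel, Term.realize_relabel, hval]
    exact h q0 hq0

/-- Swap of the two distinguished variables. -/
def swapXY : Wvar Z → Wvar Z :=
  Sum.elim (Sum.elim (fun i => .inl (.inl i)) ![.inl (.inr 1), .inl (.inr 0)]) .inr

theorem valW_swap {C D : Type u} [L.Structure C] [L.Structure D]
    (uu vv : C × D) (w : ℕ → C × D) :
    valW Z uu vv w ∘ swapXY Z = valW Z vv uu w := by
  funext a
  rcases a with (p | j)
  · rcases p with (i | j)
    · rfl
    · fin_cases j <;> rfl
  · rfl

/-- Relabelings used for transitivity. -/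
def mapT1 : Wvar Z → Wvar Z :=
  Sum.elim (Sum.elim (fun i => .inl (.inl i)) ![.inl (.inr 0), .inr 0]) (fun j => .inr (2*j+1))

def mapT2 : Wvar Z → Wvar Z :=
  Sum.elim (Sum.elim (fun i => .inl (.inl i)) ![.inr 0, .inl (.inr 1)]) (fun j => .inr (2*j+2))

/-- Combined witness assignment for transitivity. -/
def wT {γ : Type u} (mid : γ) (w1 w2 : ℕ → γ) : ℕ → γ := fun j =>
  if j = 0 then mid else if (j-1) % 2 = 0 then w1 ((j-1)/2) else w2 ((j-1-1)/2)

theorem valW_T1 {C D : Type u} [L.Structure C] [L.Structure D]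
    (uu mid vv : C × D) (w1 w2 : ℕ → C × D) :
    valW Z uu vv (wT mid w1 w2) ∘ mapT1 Z = valW Z uu mid w1 := by
  funext a
  rcases a with (p | j)
  · rcases p with (i | j)
    · rfl
    · fin_cases j
      · rfl
      · show wT mid w1 w2 0 = mid
        rfl
  · show wT mid w1 w2 (2*j+1) = w1 j
    rw [wT]
    rw [if_neg (by omega), if_pos (by omega)]
    exact congrArg w1 (by omega)

theorem valW_T2 {C D : Type u} [L.Structure C] [L.Structure D]
    (uu mid vv : C × D) (w1 w2 : ℕ → C × D) :
    valW Z uu vv (wT mid w1 w2) ∘ mapT2 Z = valW Z mid vv w2 := by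
  funext a
  rcases a with (p | j)
  · rcases p with (i | j)
    · rfl
    · fin_cases j
      · show wT mid w1 w2 0 = mid
        rfl
      · rfl
  · show wT mid w1 w2 (2*j+2) = w2 j
    rw [wT]
    rw [if_neg (by omega), if_neg (by omega)]
    exact congrArg w2 (by omega)

/-- Relabelings used for compatibility with operations. -/
def mapC (m : ℕ) (i : Fin m) : Wvar Z → Wvar Z :=
  Sum.elim (Sum.elim (fun i' => .inl (.inl i'))
    ![.inr (2*(i : ℕ)), .inr (2*(i : ℕ)+1)]) (fun j => .inr (2*m + Nat.pair i j))

/-- Combined witness assignment for compatibility. -/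
def wC {γ : Type u} (m : ℕ) (x y : Fin m → γ) (ws : Fin m → ℕ → γ) (dflt : γ) : ℕ → γ :=
  fun j =>
    if h : j < 2*m then
      (if j % 2 = 0 then x ⟨j/2, by omega⟩ else y ⟨j/2, by omega⟩)
    else
      (if h2 : (Nat.unpair (j - 2*m)).1 < m then
        ws ⟨(Nat.unpair (j - 2*m)).1, h2⟩ (Nat.unpair (j - 2*m)).2 else dflt)

theorem valW_C {C D : Type u} [L.Structure C] [L.Structure D]
    (uu vv : C × D) (m : ℕ) (x y : Fin m → C × D) (ws : Fin m → ℕ → C × D)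
    (dflt : C × D) (i : Fin m) :
    valW Z uu vv (wC m x y ws dflt) ∘ mapC Z m i = valW Z (x i) (y i) (ws i) := by
  funext a
  rcases a with (p | j)
  · rcases p with (i' | j)
    · rfl
    · fin_cases j
      · show wC m x y ws dflt (2*(i : ℕ)) = x i
        rw [wC]
        rw [dif_pos (by omega), if_pos (by omega)]
        exact congrArg x (Fin.ext (by simp))
      · show wC m x y ws dflt (2*(i : ℕ)+1) = y i
        rw [wC]
        rw [dif_pos (by omega), if_neg (by omega)]
        exact congrArg y (Fin.ext (by simp; omega))
  · show wC m x y ws dflt (2*m + Nat.pair i j) = ws i j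
    rw [wC]
    rw [dif_neg (by omega)]
    have hs : 2*m + Nat.pair (i : ℕ) j - 2*m = Nat.pair (i : ℕ) j := by omega
    rw [hs, Nat.unpair_pair]
    rw [dif_pos (show ((i : ℕ), j).1 < m from i.isLt)]

end Backward

end Aux

end Paper
namespace Paper

open FirstOrder FirstOrder.Language FirstOrder.Language.Structure

namespace Aux

variable {L : FirstOrder.Language.{0, 0}}

section PP

variable (Z : ZeroOneData L) (E : Set (Identity L))

theorem holdsAt_append {C D : Type u} [L.Structure C] [L.Structure D]
    {l1 l2 : List (L.Term (Wvar Z) × L.Term (Wvar Z))} {uu vv : C × D} {w : ℕ → C × D} :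
    HoldsAt Z (l1 ++ l2) uu vv w ↔ HoldsAt Z l1 uu vv w ∧ HoldsAt Z l2 uu vv w := by
  constructor
  · intro h
    exact ⟨fun q hq => h q (List.mem_append_left _ hq),
           fun q hq => h q (List.mem_append_right _ hq)⟩
  · rintro ⟨h1, h2⟩ q hq
    rcases List.mem_append.mp hq with h | h
    · exact h1 q h
    · exact h2 q h

theorem wT_zero {γ : Type u} (mid : γ) (w1 w2 : ℕ → γ) : wT mid w1 w2 0 = mid := rfl

theorem wT_odd {γ : Type u} (mid : γ) (w1 w2 : ℕ → γ) (j : ℕ) :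
    wT mid w1 w2 (2*j+1) = w1 j := by
  rw [wT, if_neg (by omega), if_pos (by omega)]
  exact congrArg w1 (by omega)

theorem wT_even {γ : Type u} (mid : γ) (w1 w2 : ℕ → γ) (j : ℕ) :
    wT mid w1 w2 (2*j+2) = w2 j := by
  rw [wT, if_neg (by omega), if_neg (by omega)]
  exact congrArg w2 (by omega)

theorem valW_T1' {C D : Type u} [L.Structure C] [L.Structure D]
    (uu vv : C × D) (w : ℕ → C × D) :
    valW Z uu vv w ∘ mapT1 Z = valW Z uu (w 0) (fun j => w (2*j+1)) := by
  funext a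
  rcases a with (p | j)
  · rcases p with (i | j)
    · rfl
    · fin_cases j <;> rfl
  · rfl

theorem valW_T2' {C D : Type u} [L.Structure C] [L.Structure D]
    (uu vv : C × D) (w : ℕ → C × D) :
    valW Z uu vv w ∘ mapT2 Z = valW Z (w 0) vv (fun j => w (2*j+2)) := by
  funext a
  rcases a with (p | j)
  · rcases p with (i | j)
    · rfl
    · fin_cases j <;> rfl
  · rfl

theorem valW_C' {C D : Type u} [L.Structure C] [L.Structure D]
    (uu vv : C × D) (w : ℕ → C × D) (m : ℕ) (i : Fin m) :
    valW Z uu vv w ∘ mapC Z m i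
      = valW Z (w (2*(i : ℕ))) (w (2*(i : ℕ)+1)) (fun j => w (2*m + Nat.pair i j)) := by
  funext a
  rcases a with (p | j)
  · rcases p with (i' | j)
    · rfl
    · fin_cases j <;> rfl
  · rfl

/-- The positive-primitive definability congruence on the free product. -/
def ppCon : AlgCon L ((ConQuot (eCon E (ULift.{u} (Fin 2)))) × (ConQuot (eCon E (ULift.{u} (Fin 1))))) where
  r := fun u v => ∃ Eqs w, HoldsAt Z Eqs u v w ∧ GoodEqs.{u} Z E Eqs
  refl := fun u => by
    refine ⟨[(Term.var (.inl (.inr 0)), Term.var (.inl (.inr 1)))], fun _ => u, ?_, ?_⟩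
    · intro q hq
      rw [List.mem_singleton] at hq
      subst hq
      show valW Z u u _ (.inl (.inr 0)) = valW Z u u _ (.inl (.inr 1))
      simp [valW]
    · intro C D _ _ hC hD uu vv w h
      have := h _ (List.mem_singleton_self _)
      have h2 : uu = vv := by
        have h3 : valW Z uu vv w (.inl (.inr 0)) = valW Z uu vv w (.inl (.inr 1)) := this
        simpa [valW] using h3
      rw [h2]
  symm := fun {u v} h => by
    obtain ⟨Eqs, w, hi, hg⟩ := h
    refine ⟨rele Z (swapXY Z) Eqs, w, (holdsAt_rele Z (valW_swap Z v u w)).mpr hi, ?_⟩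
    intro C D _ _ hC hD uu vv w' h
    exact (hg C D hC hD vv uu w' ((holdsAt_rele Z (valW_swap Z uu vv w')).mp h)).symm
  trans := fun {a b c} h1 h2 => by
    obtain ⟨E1, w1, hi1, hg1⟩ := h1
    obtain ⟨E2, w2, hi2, hg2⟩ := h2
    refine ⟨rele Z (mapT1 Z) E1 ++ rele Z (mapT2 Z) E2, wT b w1 w2, ?_, ?_⟩
    · rw [holdsAt_append]
      constructor
      · exact (holdsAt_rele Z (valW_T1 Z a b c w1 w2)).mpr hi1
      · exact (holdsAt_rele Z (valW_T2 Z a b c w1 w2)).mpr hi2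
    · intro C D _ _ hC hD uu vv w' h
      rw [holdsAt_append] at h
      have ha : HoldsAt Z E1 uu (w' 0) (fun j => w' (2*j+1)) :=
        (holdsAt_rele Z (valW_T1' Z uu vv w')).mp h.1
      have hb : HoldsAt Z E2 (w' 0) vv (fun j => w' (2*j+2)) :=
        (holdsAt_rele Z (valW_T2' Z uu vv w')).mp h.2
      exact (hg1 C D hC hD uu (w' 0) _ ha).trans (hg2 C D hC hD (w' 0) vv _ hb)
  compat := fun {m} f x y h => by
    choose Es ws hi hg using h
    refine ⟨(Term.var (.inl (.inr 0)),
             Term.func f (fun i => Term.var (.inr (2*(i : ℕ)))))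
        :: (Term.var (.inl (.inr 1)),
             Term.func f (fun i => Term.var (.inr (2*(i : ℕ)+1))))
        :: ((List.finRange m).flatMap fun i => rele Z (mapC Z m i) (Es i)),
      wC m x y ws (funMap f x), ?_, ?_⟩
    · intro q hq
      rcases List.mem_cons.mp hq with rfl | hq
      · show valW Z (funMap f x) (funMap f y) _ (.inl (.inr 0))
          = funMap f (fun i => valW Z (funMap f x) (funMap f y) _ (.inr (2*(i : ℕ))))
        have hx : ∀ i : Fin m, valW Z (funMap f x) (funMap f y)
            (wC m x y ws (funMap f x)) (.inr (2*(i : ℕ))) = x i := by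
          intro i
          show wC m x y ws (funMap f x) (2*(i : ℕ)) = x i
          rw [wC, dif_pos (by omega), if_pos (by omega)]
          exact congrArg x (Fin.ext (by simp))
        show funMap f x = _
        rw [funext hx]
      · rcases List.mem_cons.mp hq with rfl | hq
        · have hy : ∀ i : Fin m, valW Z (funMap f x) (funMap f y)
              (wC m x y ws (funMap f x)) (.inr (2*(i : ℕ)+1)) = y i := by
            intro i
            show wC m x y ws (funMap f x) (2*(i : ℕ)+1) = y i
            rw [wC, dif_pos (by omega), if_neg (by omega)]
            exact congrArg y (Fin.ext (by simp; omega))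
          show funMap f y = funMap f (fun i => valW Z (funMap f x) (funMap f y) _ (.inr (2*(i : ℕ)+1)))
          rw [funext hy]
        · rw [List.mem_flatMap] at hq
          obtain ⟨i, _, hmem⟩ := hq
          exact ((holdsAt_rele Z (valW_C Z (funMap f x) (funMap f y) m x y ws
            (funMap f x) i)).mpr (hi i)) q hmem
    · intro C D _ _ hC hD uu vv w' h
      have hX : uu = funMap f (fun i => w' (2*(i : ℕ))) := by
        have := h _ (List.mem_cons_self)
        exact this
      have hY : vv = funMap f (fun i => w' (2*(i : ℕ)+1)) := by
        have := h _ (List.mem_cons.mpr (Or.inr (List.mem_cons_self)))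
        exact this
      have hcomp : ∀ i : Fin m, (w' (2*(i : ℕ))).2 = (w' (2*(i : ℕ)+1)).2 := by
        intro i
        have hmem : HoldsAt Z (Es i) (w' (2*(i : ℕ))) (w' (2*(i : ℕ)+1))
            (fun j => w' (2*m + Nat.pair i j)) := by
          refine (holdsAt_rele Z (valW_C' Z uu vv w' m i)).mp ?_
          intro q hq
          exact h q (List.mem_cons.mpr (Or.inr (List.mem_cons.mpr (Or.inr
            (List.mem_flatMap.mpr ⟨i, List.mem_finRange i, hq⟩)))))
        exact hg i C D hC hD _ _ _ hmem
      rw [hX, hY]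
      show funMap f (fun i => (w' (2*(i : ℕ))).2) = funMap f (fun i => (w' (2*(i : ℕ)+1)).2)
      rw [funext hcomp]

end PP

end Aux

end Paper
namespace Paper

open FirstOrder FirstOrder.Language FirstOrder.Language.Structure

namespace Aux

variable {L : FirstOrder.Language.{0, 0}}

section Generic

variable (Z : ZeroOneData L) (E : Set (Identity L))

theorem realize_closed_relabel {M : Type u} [L.Structure M] (t : L.Term Empty)
    {β : Type*} (g : Empty → β) (v : β → M) :
    (t.relabel g).realize v = t.realize Empty.elim := by
  rw [Term.realize_relabel]
  congr 1
  funext e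
  exact e.elim

/-- Each generator `(1ᵢ, ēᵢ)` lies in `ppCon`. -/
theorem gen_ppCon [L.IsAlgebraic] (i : Fin Z.n) :
    (ppCon Z E).r
      (Z.oneA (ConQuot (eCon E (ULift.{u} (Fin 2))) × ConQuot (eCon E (ULift.{u} (Fin 1)))) i)
      (Z.zeroA (ConQuot (eCon E (ULift.{u} (Fin 2)))) i,
        Z.oneA (ConQuot (eCon E (ULift.{u} (Fin 1)))) i) := by
  classical
  set u := Z.oneA (ConQuot (eCon E (ULift.{u} (Fin 2))) × ConQuot (eCon E (ULift.{u} (Fin 1)))) i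
    with hu
  set v := (Z.zeroA (ConQuot (eCon E (ULift.{u} (Fin 2)))) i,
    Z.oneA (ConQuot (eCon E (ULift.{u} (Fin 1)))) i) with hvv
  refine ⟨[(Term.var (.inl (.inr 0)), (Z.one i).relabel (fun e => (Empty.elim e : Wvar Z))),
           (Term.var (.inl (.inr 1)), Term.var (.inl (.inl i)))], fun _ => u, ?_, ?_⟩
  · intro q hq
    rcases List.mem_cons.mp hq with rfl | hq
    · show valW Z u v _ (.inl (.inr 0)) = _
      rw [realize_closed_relabel]
      show (![u, v] : Fin 2 → _) 0 = _
      simp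
      rfl
    · rcases List.mem_cons.mp hq with rfl | hq
      · show valW Z u v _ (.inl (.inr 1)) = valW Z u v _ (.inl (.inl i))
        show (![u, v] : Fin 2 → _) 1 = _
        simp [hvv]
        rfl
      · cases hq
  · intro C D _ _ hC hD uu vv w h
    have h1 := h _ (List.mem_cons_self)
    have h2 := h _ (List.mem_cons.mpr (Or.inr (List.mem_cons_self)))
    have huu : uu = Z.oneA (C × D) i := by
      have : valW Z uu vv w (.inl (.inr 0)) = _ := h1
      rw [realize_closed_relabel] at this
      simp [valW] at this
      exact this
    have hvv2 : vv = (Z.zeroA C i, Z.oneA D i) := by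
      have : valW Z uu vv w (.inl (.inr 1)) = valW Z uu vv w (.inl (.inl i)) := h2
      simpa [valW] using this
    rw [huu, hvv2, oneA_prod]

end Generic

end Aux

end Paper
namespace Paper

open FirstOrder FirstOrder.Language FirstOrder.Language.Structure

namespace Aux

variable {L : FirstOrder.Language.{0, 0}}

section Formula

variable (Z : ZeroOneData L)

/-- A bound on the numeric witness variables occurring in a term. -/
def tBound : L.Term (Wvar Z) → ℕ
  | .var (.inr j) => j + 1
  | .var (.inl _) => 0
  | .func _ ts => Finset.univ.sup fun i => tBound (ts i)

theorem realize_agree {M : Type u} [L.Structure M] (t : L.Term (Wvar Z))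
    (v₁ v₂ : Wvar Z → M)
    (hl : ∀ p, v₁ (.inl p) = v₂ (.inl p))
    (hr : ∀ j, j < tBound Z t → v₁ (.inr j) = v₂ (.inr j)) :
    t.realize v₁ = t.realize v₂ := by
  induction t with
  | var a =>
    rcases a with p | j
    · exact hl p
    · exact hr j (by show j < j + 1; omega)
  | func f ts ih =>
    show funMap f _ = funMap f _
    congr 1
    funext i
    exact ih i (fun j hj => hr j (lt_of_lt_of_le hj
      (Finset.le_sup (f := fun i => tBound Z (ts i)) (Finset.mem_univ i))))

/-- A bound adequate for the whole list of equations. -/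
def eqsK (Eqs : List (L.Term (Wvar Z) × L.Term (Wvar Z))) : ℕ :=
  (Eqs.map (fun q => max (tBound Z q.1) (tBound Z q.2))).foldr max 0

theorem le_eqsK {Eqs : List (L.Term (Wvar Z) × L.Term (Wvar Z))} (q) (hq : q ∈ Eqs) :
    max (tBound Z q.1) (tBound Z q.2) ≤ eqsK Z Eqs := by
  induction Eqs with
  | nil => cases hq
  | cons a l ih =>
    have hstep : eqsK Z (a :: l) = max (max (tBound Z a.1) (tBound Z a.2)) (eqsK Z l) := rfl
    rcases List.mem_cons.mp hq with rfl | hq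
    · rw [hstep]; exact le_max_left _ _
    · rw [hstep]; exact le_trans (ih hq) (le_max_right _ _)

/-- Truncating relabeling into finitely many bound variables. -/
def rlv (K : ℕ) : Wvar Z → (Fin Z.n ⊕ Fin 2) ⊕ Fin K
  | .inl p => .inl p
  | .inr j => if h : j < K then .inr ⟨j, h⟩ else .inl (.inr 0)

/-- Conjunction of a list of formulas. -/
def conjList {α : Type} {k : ℕ} : List (L.BoundedFormula α k) → L.BoundedFormula α k
  | [] => ⊤
  | φ :: l => φ ⊓ conjList l

theorem realize_conjList {M : Type u} [L.Structure M] {α : Type} {k : ℕ}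
    (l : List (L.BoundedFormula α k)) (v : α → M) (xs : Fin k → M) :
    (conjList l).Realize v xs ↔ ∀ φ ∈ l, φ.Realize v xs := by
  induction l with
  | nil =>
    show (⊤ : L.BoundedFormula α k).Realize v xs ↔ _
    rw [BoundedFormula.realize_top]
    simp
  | cons φ l ih =>
    show (φ ⊓ conjList l).Realize v xs ↔ _
    rw [BoundedFormula.realize_inf, ih]
    simp

theorem isQF_conjList {α : Type} {k : ℕ} {l : List (L.BoundedFormula α k)}
    (h : ∀ φ ∈ l, φ.IsQF) : (conjList l).IsQF := by
  induction l with
  | nil => exact BoundedFormula.IsQF.top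
  | cons φ l ih =>
    exact (h φ (List.mem_cons_self)).inf (ih fun ψ hψ => h ψ (List.mem_cons.mpr (Or.inr hψ)))

/-- The quantifier-free matrix. -/
def eqsFormula (Eqs : List (L.Term (Wvar Z) × L.Term (Wvar Z))) :
    L.BoundedFormula (Fin Z.n ⊕ Fin 2) (eqsK Z Eqs) :=
  conjList (Eqs.map fun q =>
    Term.bdEqual (q.1.relabel (rlv Z (eqsK Z Eqs))) (q.2.relabel (rlv Z (eqsK Z Eqs))))

theorem isQF_eqsFormula (Eqs : List (L.Term (Wvar Z) × L.Term (Wvar Z))) :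
    (eqsFormula Z Eqs).IsQF := by
  apply isQF_conjList
  intro φ hφ
  rw [List.mem_map] at hφ
  obtain ⟨q, _, rfl⟩ := hφ
  exact (BoundedFormula.IsAtomic.equal _ _).isQF

theorem realize_eqsFormula_exs {C D : Type u} [L.Structure C] [L.Structure D]
    (Eqs : List (L.Term (Wvar Z) × L.Term (Wvar Z))) (a b : C) (c d : D) :
    ((eqsFormula Z Eqs).exs.Realize
      (Sum.elim (fun i => (Z.zeroA C i, Z.oneA D i)) ![(a, c), (b, d)]))
      ↔ ∃ w : ℕ → C × D, HoldsAt Z Eqs (a, c) (b, d) w := by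
  set val : (Fin Z.n ⊕ Fin 2) → C × D :=
    Sum.elim (fun i => (Z.zeroA C i, Z.oneA D i)) ![(a, c), (b, d)] with hval
  set K := eqsK Z Eqs with hK
  rw [BoundedFormula.realize_exs]
  constructor
  · rintro ⟨xs, hxs⟩
    rw [eqsFormula, realize_conjList] at hxs
    refine ⟨fun j => (Sum.elim val xs) (rlv Z K (.inr j)), ?_⟩
    intro q hq
    have hmem := hxs _ (List.mem_map_of_mem
      (f := fun q : L.Term (Wvar Z) × L.Term (Wvar Z) => Term.bdEqual (q.1.relabel (rlv Z K)) (q.2.relabel (rlv Z K))) hq)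
    rw [BoundedFormula.realize_bdEqual, Term.realize_relabel, Term.realize_relabel] at hmem
    have hfun : (Sum.elim val xs) ∘ (rlv Z K)
        = valW Z (a, c) (b, d) (fun j => (Sum.elim val xs) (rlv Z K (.inr j))) := by
      funext x
      rcases x with p | j
      · rfl
      · rfl
    rwa [hfun] at hmem
  · rintro ⟨w, hw⟩
    refine ⟨fun k => w (k : ℕ), ?_⟩
    rw [eqsFormula, realize_conjList]
    intro φ hφ
    rw [List.mem_map] at hφ
    obtain ⟨q, hq, rfl⟩ := hφ
    rw [BoundedFormula.realize_bdEqual, Term.realize_relabel, Term.realize_relabel]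
    have hagree : ∀ (t : L.Term (Wvar Z)), tBound Z t ≤ K →
        t.realize ((Sum.elim val (fun k : Fin K => w (k : ℕ))) ∘ (rlv Z K))
          = t.realize (valW Z (a, c) (b, d) w) := by
      intro t ht
      apply realize_agree
      · intro p; rfl
      · intro j hj
        have hjK : j < K := lt_of_lt_of_le hj ht
        show (Sum.elim val (fun k : Fin K => w (k : ℕ))) (rlv Z K (.inr j)) = w j
        rw [rlv]
        rw [dif_pos hjK]
        rfl
    have hb := le_eqsK Z q hq
    rw [hagree q.1 (le_trans (le_max_left _ _) hb), hagree q.2 (le_trans (le_max_right _ _) hb)]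
    exact hw q hq

end Formula

end Aux

end Paper
namespace Paper

open FirstOrder FirstOrder.Language FirstOrder.Language.Structure

namespace Aux

variable {L : FirstOrder.Language.{0, 0}}

section BackwardMain

variable [L.IsAlgebraic]
variable (E : Set (Identity L)) (Z : ZeroOneData L)

/-- Generic elements of the free algebras. -/
noncomputable def xgen : ConQuot (eCon E (ULift.{u} (Fin 2))) :=
  ConQuot.mk _ (Term.var (ULift.up 0))

noncomputable def ygen : ConQuot (eCon E (ULift.{u} (Fin 2))) :=
  ConQuot.mk _ (Term.var (ULift.up 1))

noncomputable def zgen : ConQuot (eCon E (ULift.{u} (Fin 1))) :=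
  ConQuot.mk _ (Term.var (ULift.up 0))

/-- Product of homomorphisms. -/
def prodHom {A B C D : Type u} [L.Structure A] [L.Structure B] [L.Structure C] [L.Structure D]
    (h₁ : A →[L] C) (h₂ : B →[L] D) : (A × B) →[L] (C × D) :=
  pairHom (h₁.comp fstHom) (h₂.comp sndHom)

theorem generic_eqs
    (hRHS : ∀ (A : Type u) [L.Structure A], InVariety E A →
        ∀ e : Fin Z.n → A, IsCentral E Z A e →
          ∀ θ δ : AlgCon L A, PairFor Z A e θ δ → δ = thetaPairs (L := L) (Z.oneA A) e) :
    ∃ Eqs w, HoldsAt Z Eqs (xgen.{u} E, zgen.{u} E) (ygen.{u} E, zgen.{u} E) w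
      ∧ GoodEqs.{u} Z E Eqs := by
  have hIV2 : InVariety E (ConQuot (eCon E (ULift.{u} (Fin 2)))) := inVariety_free E _ trivial
  have hIV1 : InVariety E (ConQuot (eCon E (ULift.{u} (Fin 1)))) := inVariety_free E _ trivial
  have hN : InVariety E ((ConQuot (eCon E (ULift.{u} (Fin 2))))
      × (ConQuot (eCon E (ULift.{u} (Fin 1))))) := inVariety_prod hIV2 hIV1
  set ebar : Fin Z.n → (ConQuot (eCon E (ULift.{u} (Fin 2))))
      × (ConQuot (eCon E (ULift.{u} (Fin 1)))) :=
    fun i => (Z.zeroA _ i, Z.oneA _ i) with hebar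
  have hcen : IsCentral E Z _ ebar :=
    ⟨{ A₁ := _, A₂ := _, mem₁ := hIV2, mem₂ := hIV1,
       iso := FirstOrder.Language.Equiv.refl L _, he := fun i => rfl }⟩
  have hpair : PairFor Z _ ebar kerFst kerSnd := by
    refine ⟨isComplFC_ker, ?_, ?_⟩
    · intro i
      show (ebar i).1 = (Z.zeroA ((ConQuot (eCon E (ULift.{u} (Fin 2))))
        × (ConQuot (eCon E (ULift.{u} (Fin 1))))) i).1
      rw [zeroA_prod]
    · intro i
      show (ebar i).2 = (Z.oneA ((ConQuot (eCon E (ULift.{u} (Fin 2))))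
        × (ConQuot (eCon E (ULift.{u} (Fin 1))))) i).2
      rw [oneA_prod]
  have hk : (kerSnd : AlgCon L _) = thetaPairs (L := L) (Z.oneA _) ebar :=
    hRHS _ hN ebar hcen kerFst kerSnd hpair
  have hker : (kerSnd : AlgCon L _).r (xgen E, zgen E) (ygen E, zgen E) := rfl
  have hth := (r_iff_of_eq hk _ _).mp hker
  exact hth (ppCon Z E) (by rintro x y ⟨i, rfl, rfl⟩; exact gen_ppCon Z E i)

theorem holdsAt_transfer {C D : Type u} [L.Structure C] [L.Structure D]
    (hC : InVariety E C) (hD : InVariety E D) (a b : C) (c : D)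
    {Eqs : List (L.Term (Wvar Z) × L.Term (Wvar Z))}
    {w : ℕ → (ConQuot (eCon E (ULift.{u} (Fin 2)))) × (ConQuot (eCon E (ULift.{u} (Fin 1))))}
    (hi : HoldsAt Z Eqs (xgen.{u} E, zgen.{u} E) (ygen.{u} E, zgen.{u} E) w) :
    HoldsAt Z Eqs (a, c) (b, c)
      (fun j => (prodHom (freeLift E hC (fun i : ULift.{u} (Fin 2) => ![a, b] i.down))
        (freeLift E hD (fun _ : ULift.{u} (Fin 1) => c))) (w j)) := by
  set h1 := freeLift E hC (fun i : ULift.{u} (Fin 2) => ![a, b] i.down) with hh1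
  set h2 := freeLift E hD (fun _ : ULift.{u} (Fin 1) => c) with hh2
  set H := prodHom h1 h2 with hH
  have hcomp : (⇑H) ∘ (valW Z (xgen.{u} E, zgen.{u} E) (ygen.{u} E, zgen.{u} E) w)
      = valW Z (a, c) (b, c) (fun j => H (w j)) := by
    funext x
    rcases x with p | j
    · rcases p with i | j
      · show H (Z.zeroA _ i, Z.oneA _ i) = (Z.zeroA C i, Z.oneA D i)
        show (h1 (Z.zeroA _ i), h2 (Z.oneA _ i)) = _
        rw [hom_zeroA Z h1 i, hom_oneA Z h2 i]
      · fin_cases j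
        · show H (xgen E, zgen E) = (a, c)
          show (h1 (xgen E), h2 (zgen E)) = (a, c)
          rw [xgen, zgen, freeLift_mk, freeLift_mk]
          show ((fun i : ULift.{u} (Fin 2) => ![a, b] i.down) (ULift.up 0),
            (fun _ : ULift.{u} (Fin 1) => c) (ULift.up 0)) = (a, c)
          simp
        · show H (ygen E, zgen E) = (b, c)
          show (h1 (ygen E), h2 (zgen E)) = (b, c)
          rw [ygen, zgen, freeLift_mk, freeLift_mk]
          show ((fun i : ULift.{u} (Fin 2) => ![a, b] i.down) (ULift.up 1),
            (fun _ : ULift.{u} (Fin 1) => c) (ULift.up 0)) = (b, c)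
          simp
    · rfl
  intro q hq
  have hter := congrArg H (hi q hq)
  rwa [← HomClass.realize_term H, ← HomClass.realize_term H, hcomp] at hter

theorem backward_dir (hbfc : HasBFC.{u} E)
    (hRHS : ∀ (A : Type u) [L.Structure A], InVariety E A →
        ∀ e : Fin Z.n → A, IsCentral E Z A e →
          ∀ θ δ : AlgCon L A, PairFor Z A e θ δ → δ = thetaPairs (L := L) (Z.oneA A) e) :
    HasRexDFC.{u} E Z := by
  obtain ⟨Eqs, w0, hi, hgood⟩ := generic_eqs E Z hRHS
  refine ⟨hbfc, (eqsFormula Z Eqs).exs,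
    ⟨eqsK Z Eqs, eqsFormula Z Eqs, isQF_eqsFormula Z Eqs, rfl⟩, ?_⟩
  intro C D _ _ hC hD a b c d
  rw [realize_eqsFormula_exs]
  constructor
  · rintro ⟨w, hw⟩
    exact hgood C D hC hD (a, c) (b, d) w hw
  · intro hcd
    subst hcd
    exact ⟨_, holdsAt_transfer E Z hC hD a b c hi⟩

end BackwardMain

end Aux

end Paper



open Paper


/-- A variety with 0⃗ and 1⃗ having BFC has RexDFC iff for every
`A ∈ V` and every central element `e⃗`, the factor congruence θ_{1,e} equals the
principal congruence θ^A(1⃗, e⃗). -/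
theorem statement1 (L : FirstOrder.Language.{0, 0}) [L.IsAlgebraic]
    [Finite (Σ n, L.Functions n)]
    (E : Set (Identity L)) (Z : ZeroOneData L)
    (hsep : ZeroOneData.Separates.{u} Z E) (hbfc : HasBFC.{u} E) :
    HasRexDFC.{u} E Z ↔
      ∀ (A : Type u) [L.Structure A], InVariety E A →
        ∀ e : Fin Z.n → A, IsCentral E Z A e →
          ∀ θ δ : AlgCon L A, PairFor Z A e θ δ → δ = thetaPairs (L := L) (Z.oneA A) e := by
  constructor
  · intro hrex A _ hA e hcen θ δ hp
    exact Paper.Aux.forward_dir hsep hbfc hrex.2 A hA e hcen θ δ hp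
  · intro hRHS
    exact Paper.Aux.backward_dir E Z hbfc hRHS
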